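/- Let A and B be Banach algebras and let φ : A → B and ψ : B → A be continuous algebra homomorphisms with φ ∘ ψ = id_B. If A is approximately cyclic amenable, then B is approximately cyclic amenable. -/
import Mathlib


open Filter Topology

noncomputable section

universe u v

variable {A : Type u} [NonUnitalNormedRing A] [NormedSpace ℂ A]
  [IsScalarTower ℂ A A] [SMulCommClass ℂ A A]

/-- The left module action of `A` on its dual `A*`: `(a · f) b = f (b * a)`. -/
def lAct (a : A) (f : A →L[ℂ] ℂ) : A →L[ℂ] ℂ :=
  f.comp ((ContinuousLinearMap.mul ℂ A).flip a)

/-- The right module action of `A` on its dual `A*`: `(f · a) b = f (a * b)`. -/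
def rAct (f : A →L[ℂ] ℂ) (a : A) : A →L[ℂ] ℂ :=
  f.comp (ContinuousLinearMap.mul ℂ A a)

/-- A bounded linear `D : A → A*` is a derivation if `D (a * b) = D a · b + a · D b`. -/
def IsDerivation (D : A →L[ℂ] (A →L[ℂ] ℂ)) : Prop :=
  ∀ a b : A, D (a * b) = rAct (D a) b + lAct a (D b)

/-- A derivation `D : A → A*` is cyclic if `⟨D a, b⟩ + ⟨D b, a⟩ = 0` for all `a, b`. -/
def IsCyclicDeriv (D : A →L[ℂ] (A →L[ℂ] ℂ)) : Prop :=
  ∀ a b : A, D a b + D b a = 0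

/-- `D : A → A*` is approximately inner if there is a net `(f i)` in `A*` with
`D a = lim_i (a · f i - f i · a)` in norm, for every `a ∈ A`. -/
def IsApproxInner {A : Type u} [NonUnitalNormedRing A] [NormedSpace ℂ A]
    [IsScalarTower ℂ A A] [SMulCommClass ℂ A A] (D : A →L[ℂ] (A →L[ℂ] ℂ)) : Prop :=
  ∃ (ι : Type u) (l : Filter ι) (f : ι → (A →L[ℂ] ℂ)), l.NeBot ∧
    ∀ a : A, Tendsto (fun i => lAct a (f i) - rAct (f i) a) l (𝓝 (D a))

/-- `D : A → A*` is inner if `D a = a · f - f · a` for some fixed `f ∈ A*`. -/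
def IsInner (D : A →L[ℂ] (A →L[ℂ] ℂ)) : Prop :=
  ∃ f : A →L[ℂ] ℂ, ∀ a : A, D a = lAct a f - rAct f a

/-- A Banach algebra is approximately cyclic amenable if every cyclic bounded
derivation `D : A → A*` is approximately inner. -/
def ApproxCyclicAmenable (A : Type u) [NonUnitalNormedRing A] [NormedSpace ℂ A]
    [IsScalarTower ℂ A A] [SMulCommClass ℂ A A] : Prop :=
  ∀ D : A →L[ℂ] (A →L[ℂ] ℂ), IsDerivation D → IsCyclicDeriv D → IsApproxInner D

/-- A Banach algebra is cyclic amenable if every cyclic bounded derivation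
`D : A → A*` is inner. -/
def CyclicAmenable (A : Type u) [NonUnitalNormedRing A] [NormedSpace ℂ A]
    [IsScalarTower ℂ A A] [SMulCommClass ℂ A A] : Prop :=
  ∀ D : A →L[ℂ] (A →L[ℂ] ℂ), IsDerivation D → IsCyclicDeriv D → IsInner D


theorem lAct_apply (a : A) (f : A →L[ℂ] ℂ) (x : A) : lAct a f x = f (x * a) := rfl

theorem rAct_apply (f : A →L[ℂ] ℂ) (a x : A) : rAct f a x = f (a * x) := rfl

/-- If `φ : A → B` and `ψ : B → A` are continuous algebra homomorphisms
between Banach algebras with `φ ∘ ψ = id`, and `A` is approximately cyclic amenable,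
then so is `B`. -/
theorem approxCyclicAmenable_of_retract
    {A : Type u} {B : Type v} [NonUnitalNormedRing A] [NormedSpace ℂ A]
    [IsScalarTower ℂ A A] [SMulCommClass ℂ A A] [CompleteSpace A]
    [NonUnitalNormedRing B] [NormedSpace ℂ B]
    [IsScalarTower ℂ B B] [SMulCommClass ℂ B B] [CompleteSpace B]
    (φ : A →L[ℂ] B) (hφ : ∀ x y : A, φ (x * y) = φ x * φ y)
    (ψ : B →L[ℂ] A) (hψ : ∀ x y : B, ψ (x * y) = ψ x * ψ y)
    (hcomp : ∀ b : B, φ (ψ b) = b)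
    (hA : ApproxCyclicAmenable A) : ApproxCyclicAmenable B := by
  intro D hD hC
  let T : (B →L[ℂ] ℂ) →L[ℂ] (A →L[ℂ] ℂ) := (ContinuousLinearMap.compL ℂ A B ℂ).flip φ
  let D' : A →L[ℂ] (A →L[ℂ] ℂ) := T.comp (D.comp φ)
  have hD'val : ∀ a x : A, D' a x = D (φ a) (φ x) := fun a x => rfl
  have hder : IsDerivation D' := by
    intro a b
    ext x
    rw [ContinuousLinearMap.add_apply, hD'val, hφ, hD (φ a) (φ b),
      ContinuousLinearMap.add_apply, rAct_apply, lAct_apply, rAct_apply, lAct_apply,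
      hD'val, hD'val, hφ, hφ]
  have hcyc : IsCyclicDeriv D' := by
    intro a b
    rw [hD'val, hD'val]
    exact hC (φ a) (φ b)
  obtain ⟨ι, l, f, hne, hf⟩ := hA D' hder hcyc
  refine ⟨B →L[ℂ] ℂ, l.map (fun i => (f i).comp ψ), id, Filter.map_neBot, ?_⟩
  intro b
  rw [Filter.tendsto_map'_iff]
  let S : (A →L[ℂ] ℂ) →L[ℂ] (B →L[ℂ] ℂ) := (ContinuousLinearMap.compL ℂ B A ℂ).flip ψ
  have key := (S.continuous.tendsto (D' (ψ b))).comp (hf (ψ b))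
  have h1 : (S ∘ fun i => lAct (ψ b) (f i) - rAct (f i) (ψ b)) =
      ((fun g => lAct b g - rAct g b) ∘ fun i => (f i).comp ψ) := by
    funext i
    ext x
    show (lAct (ψ b) (f i) - rAct (f i) (ψ b)) (ψ x)
      = (lAct b ((f i).comp ψ) - rAct ((f i).comp ψ) b) x
    simp only [ContinuousLinearMap.sub_apply, lAct_apply, rAct_apply,
      ContinuousLinearMap.comp_apply, hψ]
  have h2 : S (D' (ψ b)) = D b := by
    ext x
    show D' (ψ b) (ψ x) = D b x
    rw [hD'val, hcomp, hcomp]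
  rw [h1, h2] at key
  exact key
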